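/- For all real numbers a, b > 0, K ∈ ℝ, l > 0 and λ ∈ (0,1), one has lim_{ε↓0} −(1/ε) · log[ (s_{−Kε}((1−λ)l)/s_{−Kε}(l)) · a^{−ε} + (s_{−Kε}(λl)/s_{−Kε}(l)) · b^{−ε} ] = (1−λ) log a + λ log b + (K/2)(1−λ)λ l². -/

import Mathlib

open Filter Topology

/-- The comparison function `s_κ`: solution of `f'' + κ f = 0`, `f(0) = 0`, `f'(0) = 1`. -/
noncomputable def sk (κ r : ℝ) : ℝ :=
  if 0 < κ then Real.sin (Real.sqrt κ * r) / Real.sqrt κ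
  else if κ = 0 then r
  else Real.sinh (Real.sqrt (-κ) * r) / Real.sqrt (-κ)

/-- The `N = ∞` curvature-dimension inequality is the limit of the finite (negative) `N`
inequalities: with `ε = −1/(N−1) ↓ 0`,
`−ε⁻¹ log[ (s_{−Kε}((1−λ)l)/s_{−Kε}(l)) a^{−ε} + (s_{−Kε}(λl)/s_{−Kε}(l)) b^{−ε} ]`
tends to `(1−λ) log a + λ log b + (K/2)(1−λ)λ l²`. -/

lemma sinh_taylor {x : ℝ} (hx : |x| ≤ 1) :
    |Real.sinh x - (x + (1/6)*x^3)| ≤ |x|^4 * (5/96) := by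
  have h1 := Real.exp_bound hx (by norm_num : 0 < 4)
  have h2 := Real.exp_bound (x := -x) (by rwa [abs_neg]) (by norm_num : 0 < 4)
  have e1 : ∑ m ∈ Finset.range 4, x ^ m / (m.factorial : ℝ) = 1 + x + x^2/2 + x^3/6 := by
    simp [Finset.sum_range_succ, Nat.factorial]
  have e2 : ∑ m ∈ Finset.range 4, (-x) ^ m / (m.factorial : ℝ) = 1 - x + x^2/2 - x^3/6 := by
    simp [Finset.sum_range_succ, Nat.factorial]; ring
  rw [e1] at h1; rw [e2, abs_neg] at h2
  norm_num [Nat.factorial] at h1 h2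
  have : Real.sinh x - (x + (1/6)*x^3) =
      ((Real.exp x - (1 + x + x^2/2 + x^3/6)) - (Real.exp (-x) - (1 - x + x^2/2 - x^3/6)))/2 := by
    rw [Real.sinh_eq]; ring
  rw [this]
  calc |((Real.exp x - (1 + x + x^2/2 + x^3/6)) - (Real.exp (-x) - (1 - x + x^2/2 - x^3/6)))/2|
      ≤ (|Real.exp x - (1 + x + x^2/2 + x^3/6)| + |Real.exp (-x) - (1 - x + x^2/2 - x^3/6)|)/2 := by
        rw [abs_div]; simp only [abs_two]; gcongr; exact abs_sub _ _
    _ ≤ (|x|^4 * (5/96) + |x|^4 * (5/96))/2 := by gcongr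
    _ = |x|^4 * (5/96) := by ring


lemma tendsto_aux (M r c : ℝ) (hM : 0 < M) (hr : 0 < r) (F : ℝ → ℝ)
    (hF : ∀ x : ℝ, |x| ≤ 1 → |F x - (x + c*x^3)| ≤ |x|^4 * (5/96)) :
    Tendsto (fun ε => (F (Real.sqrt (M*ε) * r) / Real.sqrt (M*ε) - r)/ε)
      (𝓝[>] (0:ℝ)) (𝓝 (M * c * r^3)) := by
  rw [tendsto_iff_dist_tendsto_zero]
  apply squeeze_zero' (g := fun ε => (M * Real.sqrt M * r^4 * (5/96)) * Real.sqrt ε)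
  · filter_upwards with ε using dist_nonneg
  · have hδ : (0:ℝ) < 1/(M*r^2) := by positivity
    filter_upwards [Ioo_mem_nhdsGT_of_mem ⟨le_refl (0:ℝ), hδ⟩] with ε hε
    obtain ⟨hε0, hεδ⟩ := hε
    set s := Real.sqrt (M*ε) with hs
    have hMε : 0 < M*ε := by positivity
    have hs0 : 0 < s := Real.sqrt_pos.mpr hMε
    have hs2 : s^2 = M*ε := Real.sq_sqrt hMε.le
    have hsr1 : |s*r| ≤ 1 := by
      rw [abs_of_nonneg (by positivity)]
      nlinarith [hs2, (lt_div_iff₀ (by positivity : (0:ℝ) < M*r^2)).mp hεδ, mul_pos hs0 hr]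
    have hεeq : ε = s^2/M := by rw [hs2]; field_simp
    have key : (F (s*r)/s - r)/ε - M*c*r^3 = (M/s^3) * (F (s*r) - (s*r + c*(s*r)^3)) := by
      rw [hεeq]; field_simp; ring
    rw [Real.dist_eq, key, abs_mul, abs_of_pos (by positivity : (0:ℝ) < M/s^3)]
    calc M/s^3 * |F (s*r) - (s*r + c*(s*r)^3)| ≤ M/s^3 * (|s*r|^4 * (5/96)) := by
          gcongr; exact hF _ hsr1
      _ = M * r^4 * (5/96) * s := by
          rw [abs_of_nonneg (by positivity : (0:ℝ) ≤ s*r)]; field_simp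
      _ = (M * Real.sqrt M * r^4 * (5/96)) * Real.sqrt ε := by
          rw [hs, Real.sqrt_mul hM.le]; ring
  · have : Tendsto (fun ε : ℝ => Real.sqrt ε) (𝓝[>] 0) (𝓝 0) := by
      simpa using (Real.continuous_sqrt.tendsto 0).mono_left nhdsWithin_le_nhds
    simpa using this.const_mul (M * Real.sqrt M * r^4 * (5/96))

lemma sk_hasDeriv (K r : ℝ) (hr : 0 < r) :
    HasDerivWithinAt (fun ε => sk (-K*ε) r) (K*r^3/6) (Set.Ioi 0) 0 := by
  have hsk0 : sk 0 r = r := by simp [sk]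
  rw [hasDerivWithinAt_iff_tendsto_slope]
  have hset : Set.Ioi (0:ℝ) \ {0} = Set.Ioi 0 := by
    simp [Set.diff_singleton_eq_self]
  rw [hset]
  have hslope : ∀ ε : ℝ, ε ≠ 0 → slope (fun ε => sk (-K*ε) r) 0 ε
      = (sk (-K*ε) r - r)/ε := by
    intro ε hε
    rw [slope_def_field]
    simp [hsk0, div_eq_div_iff]
  apply Tendsto.congr' (f₁ := fun ε => (sk (-K*ε) r - r)/ε)
  · filter_upwards [self_mem_nhdsWithin] with ε hε
    exact (hslope ε (ne_of_gt hε)).symm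
  rcases lt_trichotomy K 0 with hK | hK | hK
  · -- K < 0 : sin branch
    have h := tendsto_aux (-K) r (-(1/6)) (by linarith) hr Real.sin (by
      intro x hx
      have := Real.sin_bound hx
      calc |Real.sin x - (x + -(1/6)*x^3)| = |Real.sin x - (x - x^3/6)| := by ring_nf
        _ ≤ |x|^5/100 := this
        _ ≤ |x|^4 * (5/96) := by
          have h4 := mul_le_mul_of_nonneg_left hx (pow_nonneg (abs_nonneg x) 4)
          rw [pow_succ]; nlinarith [pow_nonneg (abs_nonneg x) 4])
    have heq : ∀ ε ∈ Set.Ioi (0:ℝ),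
        (Real.sin (Real.sqrt (-K*ε) * r) / Real.sqrt (-K*ε) - r)/ε = (sk (-K*ε) r - r)/ε := by
      intro ε hε
      have hpos : 0 < -K*ε := by
        have : (0:ℝ) < ε := hε
        nlinarith
      rw [sk, if_pos hpos]
    have := h.congr' (by filter_upwards [self_mem_nhdsWithin] with ε hε using heq ε hε)
    convert this using 2
    ring
  · subst hK
    have : ∀ ε ∈ Set.Ioi (0:ℝ), (0:ℝ) = (sk (-0*ε) r - r)/ε := by
      intro ε hε; simp [sk]
    have h2 := (tendsto_const_nhds (x := (0:ℝ)) (f := 𝓝[>] (0:ℝ))).congr'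
      (by filter_upwards [self_mem_nhdsWithin] with ε hε using this ε hε)
    convert h2 using 2
    ring
  · -- K > 0 : sinh branch
    have h := tendsto_aux K r (1/6) hK hr Real.sinh (fun x hx => sinh_taylor hx)
    have heq : ∀ ε ∈ Set.Ioi (0:ℝ),
        (Real.sinh (Real.sqrt (K*ε) * r) / Real.sqrt (K*ε) - r)/ε = (sk (-K*ε) r - r)/ε := by
      intro ε hε
      have hε0 : (0:ℝ) < ε := hε
      have hneg : ¬ (0 < -K*ε) := by nlinarith
      have hne : ¬ (-K*ε = 0) := by nlinarith
      rw [sk, if_neg hneg, if_neg hne]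
      norm_num
    have := h.congr' (by filter_upwards [self_mem_nhdsWithin] with ε hε using heq ε hε)
    convert this using 2
    ring

theorem stmt_17 (a b K l lam : ℝ) (ha : 0 < a) (hb : 0 < b) (hl : 0 < l)
    (hlam : lam ∈ Set.Ioo (0 : ℝ) 1) :
    Tendsto
      (fun ε : ℝ =>
        -(1 / ε) * Real.log
          (sk (-K * ε) ((1 - lam) * l) / sk (-K * ε) l * a ^ (-ε) +
            sk (-K * ε) (lam * l) / sk (-K * ε) l * b ^ (-ε)))
      (𝓝[>] (0 : ℝ))
      (𝓝 ((1 - lam) * Real.log a + lam * Real.log b +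
        K / 2 * (1 - lam) * lam * l ^ 2)) := by
  obtain ⟨hlam0, hlam1⟩ := hlam
  have hr1 : 0 < (1 - lam) * l := by nlinarith
  have hr2 : 0 < lam * l := by positivity
  have hln : l ≠ 0 := ne_of_gt hl
  set F : ℝ → ℝ := fun ε =>
    sk (-K * ε) ((1 - lam) * l) / sk (-K * ε) l * a ^ (-ε) +
      sk (-K * ε) (lam * l) / sk (-K * ε) l * b ^ (-ε) with hFdef
  set D : ℝ := -((1 - lam) * Real.log a + lam * Real.log b +
      K / 2 * (1 - lam) * lam * l ^ 2) with hDdef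
  -- derivative of a ^ (-ε)
  have hrpow : ∀ c : ℝ, 0 < c →
      HasDerivWithinAt (fun ε : ℝ => c ^ (-ε)) (-Real.log c) (Set.Ioi 0) 0 := by
    intro c hc
    have h0 : HasDerivAt (fun x : ℝ => c ^ x) (c ^ (-(0:ℝ)) * Real.log c) (-(0:ℝ)) :=
      (Real.hasStrictDerivAt_const_rpow hc _).hasDerivAt
    have h1 := h0.comp (0:ℝ) ((hasDerivAt_id (0:ℝ)).neg)
    have h2 : HasDerivAt (fun ε : ℝ => c ^ (-ε)) (c ^ (-(0:ℝ)) * Real.log c * (-1)) 0 := h1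
    have h3 : c ^ (-(0:ℝ)) * Real.log c * (-1) = -Real.log c := by
      simp [Real.rpow_zero]
    rw [h3] at h2
    exact h2.hasDerivWithinAt
  have hLne : (fun ε => sk (-K*ε) l) 0 ≠ 0 := by
    simp [sk, hln]
  have hq : ∀ r : ℝ, 0 < r →
      HasDerivWithinAt (fun ε => sk (-K*ε) r / sk (-K*ε) l)
        ((K*r^3/6 * l - r * (K*l^3/6)) / l^2) (Set.Ioi 0) 0 := by
    intro r hr
    have h := (sk_hasDeriv K r hr).div (sk_hasDeriv K l hl) hLne
    convert h using 1
    · rfl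
    · rfl
    · rfl
    simp [sk]
  have hFderiv : HasDerivWithinAt F D (Set.Ioi 0) 0 := by
    have h := ((hq _ hr1).mul (hrpow a ha)).add ((hq _ hr2).mul (hrpow b hb))
    convert h using 1
    · rfl
    · rfl
    · rfl
    simp only [sk, mul_zero, neg_zero, lt_irrefl, if_false, if_pos rfl, if_neg (lt_irrefl (0:ℝ)).elim,
      Real.rpow_zero, ↓reduceIte]
    rw [hDdef]
    field_simp
    ring
  have hF0 : F 0 = 1 := by
    rw [hFdef]
    simp only [mul_zero, neg_zero, sk, lt_irrefl, if_false, if_pos rfl, Real.rpow_zero, ↓reduceIte]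
    field_simp
    ring
  have hGderiv : HasDerivWithinAt (fun ε => Real.log (F ε)) D (Set.Ioi 0) 0 := by
    have := hFderiv.log (by rw [hF0]; norm_num)
    rwa [hF0, div_one] at this
  rw [hasDerivWithinAt_iff_tendsto_slope] at hGderiv
  have hset : Set.Ioi (0:ℝ) \ {0} = Set.Ioi 0 := by
    simp [Set.diff_singleton_eq_self]
  rw [hset] at hGderiv
  have hneg := hGderiv.neg
  have : -D = (1 - lam) * Real.log a + lam * Real.log b +
      K / 2 * (1 - lam) * lam * l ^ 2 := by rw [hDdef]; ring
  rw [this] at hneg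
  apply hneg.congr'
  filter_upwards [self_mem_nhdsWithin] with ε hε
  have hεne : ε ≠ 0 := ne_of_gt hε
  rw [slope_def_field]
  have hG0 : Real.log (F 0) = 0 := by rw [hF0]; exact Real.log_one
  rw [hG0, sub_zero, sub_zero]
  ring
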